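/- Let δ = δ_0 + uδ_1 + ⋯ + u^{t−1}δ_{t−1} ∈ R^t be a unit such that δ_k ≠ 0 for some 1 ≤ k ≤ t−1, and let k be the smallest such index. Then in the ring R^{t,n}_δ = R^t[x]/⟨x^{np^s} − δ⟩, the ideal generated by (x^n − δ_{0,0})^{p^s} equals the ideal generated by u^k. -/

import Mathlib

open Polynomial

/-- The finite chain ring `R^t = 𝔽_{p^m}[u]/⟨u^t⟩`. -/
abbrev Rt (p m t : ℕ) [Fact p.Prime] : Type _ :=
  Polynomial (GaloisField p m) ⧸ Ideal.span {(X : Polynomial (GaloisField p m)) ^ t}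

/-- The canonical projection `𝔽_{p^m}[u] → R^t`. -/
noncomputable def mkRt (p m t : ℕ) [Fact p.Prime] :
    Polynomial (GaloisField p m) →+* Rt p m t :=
  Ideal.Quotient.mk _

/-- The element `u ∈ R^t`. -/
noncomputable def uRt (p m t : ℕ) [Fact p.Prime] : Rt p m t := mkRt p m t X

/-- The canonical embedding `𝔽_{p^m} → R^t`. -/
noncomputable def κ (p m t : ℕ) [Fact p.Prime] : GaloisField p m →+* Rt p m t :=
  (mkRt p m t).comp (C : GaloisField p m →+* Polynomial (GaloisField p m))

/-- The quotient ring `R^t[x]/⟨x^N − δ⟩`. -/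
abbrev Qr (p m t : ℕ) [Fact p.Prime] (N : ℕ) (δ : Rt p m t) : Type _ :=
  Polynomial (Rt p m t) ⧸ Ideal.span {(X : Polynomial (Rt p m t)) ^ N - C δ}

noncomputable instance (p m t : ℕ) [Fact p.Prime] (N : ℕ) (δ : Rt p m t) :
    CommRing (Qr p m t N δ) :=
  @Ideal.Quotient.commRing (Polynomial (Rt p m t)) _ _

/-- The canonical projection `R^t[x] → R^t[x]/⟨x^N − δ⟩`. -/
noncomputable def mkQr (p m t : ℕ) [Fact p.Prime] (N : ℕ) (δ : Rt p m t) :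
    Polynomial (Rt p m t) →+* Qr p m t N δ :=
  @Ideal.Quotient.mk (Polynomial (Rt p m t)) _ _ ⟨fun b ha => mul_comm b _ ▸ Ideal.mul_mem_left _ b ha⟩

-- auxiliary: char p of Rt
lemma charP_Rt (p m t : ℕ) [Fact p.Prime] (ht : 1 ≤ t) : CharP (Rt p m t) p := by
  haveI : CharP (Polynomial (GaloisField p m)) p :=
    charP_of_injective_ringHom (C_injective (R := GaloisField p m)) p
  apply CharP.quotient' p
  intro x hx
  rw [Ideal.mem_span_singleton] at hx
  obtain ⟨g, hg⟩ := hx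
  by_contra h
  have hX : (X : Polynomial (GaloisField p m)) ^ t ≠ 0 := pow_ne_zero _ X_ne_zero
  have hgne : g ≠ 0 := by rintro rfl; rw [mul_zero] at hg; exact h hg
  have hdeg : ((x : Polynomial (GaloisField p m))).natDegree = t + g.natDegree := by
    rw [hg, natDegree_mul hX hgne, natDegree_X_pow]
  rw [Polynomial.natDegree_natCast] at hdeg
  omega

-- unit criterion
lemma isUnit_mkRt (p m t : ℕ) [Fact p.Prime] (g : Polynomial (GaloisField p m))
    (hg : g.coeff 0 ≠ 0) : IsUnit (mkRt p m t g) := by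
  have h : mkRt p m t g = mkRt p m t (C (g.coeff 0)) + mkRt p m t (X * g.divX) := by
    rw [← map_add, add_comm, X_mul_divX_add]
  have hnil : IsNilpotent (mkRt p m t (X * g.divX)) := by
    refine ⟨t, ?_⟩
    rw [← map_pow]
    apply Ideal.Quotient.eq_zero_iff_mem.mpr
    apply Ideal.mem_span_singleton.mpr
    exact ⟨g.divX ^ t, by rw [mul_pow]⟩
  have hu : IsUnit (mkRt p m t (C (g.coeff 0))) := by
    exact (isUnit_iff_ne_zero.mpr hg).map (κ p m t)
  rw [h]
  exact hnil.isUnit_add_left_of_commute hu (Commute.all _ _)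

/-- Let `δ = δ₀ + uδ₁ + ⋯ + u^{t-1}δ_{t-1} ∈ R^t` be a unit such that
`δ_k ≠ 0` for some `1 ≤ k ≤ t−1`, and let `k` be the smallest such index.  Then in the ring
`R^{t,n}_δ = R^t[x]/⟨x^{np^s} − δ⟩` the ideal generated by `(xⁿ − δ_{0,0})^{p^s}` equals the
ideal generated by `u^k`. -/
theorem stmt_5 (p m s t n : ℕ) [Fact p.Prime] (hm : m ≠ 0) (ht : 1 ≤ t)
    (hn : 0 < n) (hnp : ¬ p ∣ n)
    (δc : ℕ → GaloisField p m) (hδ0 : δc 0 ≠ 0)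
    (δ00 : GaloisField p m) (hδ00 : δ00 ^ p ^ s = δc 0)
    (k : ℕ) (hk1 : 1 ≤ k) (hkt : k ≤ t - 1) (hδk : δc k ≠ 0)
    (hkmin : ∀ j, 1 ≤ j → j < k → δc j = 0) :
    Ideal.span {(mkQr p m t (n * p ^ s)
        (mkRt p m t (∑ i ∈ Finset.range t, C (δc i) * X ^ i))
        (X ^ n - C (κ p m t δ00))) ^ p ^ s} =
    Ideal.span {mkQr p m t (n * p ^ s)
        (mkRt p m t (∑ i ∈ Finset.range t, C (δc i) * X ^ i))
        (C (uRt p m t ^ k))} := by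
  haveI : CharP (Rt p m t) p := charP_Rt p m t ht
  haveI : CharP (Polynomial (Rt p m t)) p :=
    charP_of_injective_ringHom (C_injective (R := Rt p m t)) p
  set δp : Polynomial (GaloisField p m) := ∑ i ∈ Finset.range t, C (δc i) * X ^ i with hδp
  set δ : Rt p m t := mkRt p m t δp with hδ
  set f : Polynomial (Rt p m t) →+* Qr p m t (n * p ^ s) δ := mkQr p m t (n * p ^ s) δ with hf
  -- the unit part
  set g : Polynomial (GaloisField p m) :=
    ∑ j ∈ Finset.range (t - k), C (δc (k + j)) * X ^ j with hg
  have hkt' : k < t := lt_of_lt_of_le (Nat.lt_succ_of_le hkt) (by omega)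
  -- polynomial identity δp = C (δc 0) + X^k * g
  have hpoly : δp = C (δc 0) + X ^ k * g := by
    have h1 : X ^ k * g = ∑ i ∈ Finset.Ico k t, C (δc i) * X ^ i := by
      rw [Finset.sum_Ico_eq_sum_range, Finset.mul_sum]
      congr 1
      ext j
      rw [pow_add]
      ring
    have h2 : ∑ i ∈ Finset.range k, C (δc i) * X ^ i = C (δc 0) := by
      rw [Finset.sum_eq_single_of_mem 0 (Finset.mem_range.mpr hk1)]
      · simp
      · intro i hi hi0
        rw [hkmin i (Nat.one_le_iff_ne_zero.mpr hi0) (Finset.mem_range.mp hi)]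
        simp
    rw [h1, ← h2, hδp, Finset.range_eq_Ico, ← Finset.sum_Ico_consecutive _ (Nat.zero_le k) (le_of_lt hkt'), ← Finset.range_eq_Ico]
  have hgc : g.coeff 0 = δc k := by
    rw [hg]
    rw [finset_sum_coeff]
    rw [Finset.sum_eq_single_of_mem 0 (Finset.mem_range.mpr (by omega))]
    · simp
    · intro i hi hi0
      simp [coeff_C_mul, coeff_X_pow, hi0, Ne.symm hi0]
  have hgu : IsUnit (mkRt p m t g) := isUnit_mkRt p m t g (by rw [hgc]; exact hδk)
  -- δ - κ (δc 0) = u^k * mkRt g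
  have hδdecomp : δ - κ p m t (δc 0) = uRt p m t ^ k * mkRt p m t g := by
    rw [hδ, hpoly, map_add]
    have : κ p m t (δc 0) = mkRt p m t (C (δc 0)) := rfl
    rw [this, add_sub_cancel_left, map_mul, map_pow]
    rfl
  -- freshman's dream
  have hfrob : (X ^ n - C (κ p m t δ00) : Polynomial (Rt p m t)) ^ p ^ s
      = X ^ (n * p ^ s) - C (κ p m t (δc 0)) := by
    rw [sub_pow_char_pow_of_commute _ _ (commute_X_pow _ _), ← pow_mul, ← C_pow, ← map_pow, hδ00]
  -- f (X^{np^s}) = f (C δ)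
  have hX : f (X ^ (n * p ^ s)) = f (C δ) := by
    rw [← sub_eq_zero, ← map_sub]
    haveI : (Ideal.span {(X : Polynomial (Rt p m t)) ^ (n * p ^ s) - C δ}).IsTwoSided :=
      ⟨fun b ha => mul_comm b _ ▸ Ideal.mul_mem_left _ b ha⟩
    apply Ideal.Quotient.eq_zero_iff_mem.mpr
    exact Ideal.subset_span rfl
  have key : (f (X ^ n - C (κ p m t δ00))) ^ p ^ s
      = f (C (uRt p m t ^ k)) * f (C (mkRt p m t g)) := by
    rw [← map_pow, hfrob, map_sub, hX, ← map_sub, ← map_mul, ← C_sub, ← C_mul, hδdecomp]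
  rw [key]
  exact Ideal.span_singleton_mul_right_unit (hgu.map (f.comp C)) _
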